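/- arXiv:2103.05452 — 3 statements merged into one kernel-verified Lean document; each statement's English description precedes it below -/
import Mathlib

section
/- Let G ≤ Aut(T) act spherically transitively on T. Then for every integer s ≥ 1 the s-th Basilica group Bas_s(G) acts spherically transitively on T. -/
/-!
Groups of automorphisms of the `m`-regular rooted tree, encoded via portraits:
an automorphism is determined by the family of its labels (local actions)
`label : List (Fin m) → Equiv.Perm (Fin m)`.
-/

namespace Basilica

/-- An automorphism of the `m`-regular rooted tree, given by its portrait. -/
structure TreeAut (m : ℕ) where
  label : List (Fin m) → Equiv.Perm (Fin m)

namespace TreeAut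

variable {m : ℕ}

lemma ext_label {a b : TreeAut m} (h : ∀ u, a.label u = b.label u) : a = b := by
  cases a
  cases b
  simp only [mk.injEq]
  exact funext h

/-- The section of an automorphism at a vertex. -/
def sec (a : TreeAut m) (v : List (Fin m)) : TreeAut m := ⟨fun u => a.label (v ++ u)⟩

@[simp] lemma sec_label (a : TreeAut m) (v u : List (Fin m)) :
    (a.sec v).label u = a.label (v ++ u) := rfl

@[simp] lemma sec_nil (a : TreeAut m) : a.sec [] = a := rfl

lemma sec_sec (a : TreeAut m) (v w : List (Fin m)) : (a.sec v).sec w = a.sec (v ++ w) :=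
  ext_label fun u => by simp [List.append_assoc]

/-- The action of a tree automorphism on the vertices (finite words). -/
def apply : TreeAut m → List (Fin m) → List (Fin m)
  | _, [] => []
  | a, x :: u => a.label [] x :: (a.sec [x]).apply u

/-- The inverse action of a tree automorphism on the vertices. -/
def invApply : TreeAut m → List (Fin m) → List (Fin m)
  | _, [] => []
  | a, x :: u => (a.label [])⁻¹ x :: (a.sec [(a.label [])⁻¹ x]).invApply u

instance : One (TreeAut m) := ⟨⟨fun _ => 1⟩⟩
instance : Mul (TreeAut m) := ⟨fun a b => ⟨fun u => a.label (b.apply u) * b.label u⟩⟩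
instance : Inv (TreeAut m) := ⟨fun a => ⟨fun u => (a.label (a.invApply u))⁻¹⟩⟩

@[simp] lemma one_label (u : List (Fin m)) : (1 : TreeAut m).label u = 1 := rfl

@[simp] lemma mul_label (a b : TreeAut m) (u : List (Fin m)) :
    (a * b).label u = a.label (b.apply u) * b.label u := rfl

@[simp] lemma inv_label (a : TreeAut m) (u : List (Fin m)) :
    a⁻¹.label u = (a.label (a.invApply u))⁻¹ := rfl

@[simp] lemma one_sec (v : List (Fin m)) : (1 : TreeAut m).sec v = 1 := rfl

@[simp] lemma apply_nil (a : TreeAut m) : a.apply [] = [] := rfl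

lemma apply_cons (a : TreeAut m) (x : Fin m) (u : List (Fin m)) :
    a.apply (x :: u) = a.label [] x :: (a.sec [x]).apply u := rfl

@[simp] lemma one_apply (u : List (Fin m)) : (1 : TreeAut m).apply u = u := by
  induction u with
  | nil => rfl
  | cons x u ih => simp [apply_cons, ih]

lemma apply_append (a : TreeAut m) (v u : List (Fin m)) :
    a.apply (v ++ u) = a.apply v ++ (a.sec v).apply u := by
  induction v generalizing a with
  | nil => simp
  | cons x v ih =>
      simp only [List.cons_append, apply_cons, ih, sec_sec, List.singleton_append,
        List.nil_append]

lemma mul_sec (a b : TreeAut m) (v : List (Fin m)) :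
    (a * b).sec v = a.sec (b.apply v) * b.sec v :=
  ext_label fun u => by simp [apply_append]

lemma mul_apply (a b : TreeAut m) (u : List (Fin m)) :
    (a * b).apply u = a.apply (b.apply u) := by
  induction u generalizing a b with
  | nil => rfl
  | cons x u ih =>
      rw [apply_cons, mul_sec, ih]
      simp [apply_cons, Equiv.Perm.mul_apply]

lemma invApply_apply (a : TreeAut m) (u : List (Fin m)) : a.invApply (a.apply u) = u := by
  induction u generalizing a with
  | nil => rfl
  | cons x u ih => simp [apply_cons, invApply, ih]

lemma apply_invApply (a : TreeAut m) (u : List (Fin m)) : a.apply (a.invApply u) = u := by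
  induction u generalizing a with
  | nil => rfl
  | cons x u ih => simp [invApply, apply_cons, ih]

instance : Group (TreeAut m) where
  mul_assoc a b c := ext_label fun u => by simp [mul_apply, mul_assoc]
  one_mul a := ext_label fun u => by simp
  mul_one a := ext_label fun u => by simp
  inv_mul_cancel a := ext_label fun u => by simp [invApply_apply]

lemma apply_injective (a : TreeAut m) : Function.Injective a.apply := by
  intro x y h
  have hx := invApply_apply a x
  rw [h, invApply_apply] at hx
  exact hx.symm

@[simp] lemma apply_length (a : TreeAut m) (u : List (Fin m)) :
    (a.apply u).length = u.length := by
  induction u generalizing a with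
  | nil => rfl
  | cons x u ih => simp [apply_cons, ih]

/-- `cons ρ f` is `ρ · ψ₁⁻¹(f 0, …, f (m-1))`: the automorphism with root label `ρ`
and first-layer sections `f x`. -/
def cons (ρ : Equiv.Perm (Fin m)) (f : Fin m → TreeAut m) : TreeAut m :=
  ⟨fun u =>
    match u with
    | [] => ρ
    | x :: v => (f x).label v⟩

end TreeAut

variable {m : ℕ}

/-- The `n`-th layer stabiliser `St_G(n)` of a group `G` of tree automorphisms. -/
def layerStab (G : Subgroup (TreeAut m)) (n : ℕ) : Subgroup (TreeAut m) where
  carrier := {g | g ∈ G ∧ ∀ u : List (Fin m), u.length = n → g.apply u = u}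
  one_mem' := ⟨G.one_mem, fun u _ => TreeAut.one_apply u⟩
  mul_mem' := by
    rintro a b ⟨haG, ha⟩ ⟨hbG, hb⟩
    refine ⟨G.mul_mem haG hbG, fun u hu => ?_⟩
    rw [TreeAut.mul_apply, hb u hu, ha u hu]
  inv_mem' := by
    rintro a ⟨haG, ha⟩
    refine ⟨G.inv_mem haG, fun u hu => ?_⟩
    apply TreeAut.apply_injective a
    rw [← TreeAut.mul_apply, mul_inv_cancel, TreeAut.one_apply, ha u hu]

/-- A group of tree automorphisms acts spherically transitively if it acts
transitively on every layer. -/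
def SphericallyTransitive (G : Subgroup (TreeAut m)) : Prop :=
  ∀ u v : List (Fin m), u.length = v.length → ∃ g ∈ G, g.apply u = v

/-- A group of tree automorphisms is self-similar if it is closed under sections. -/
def SelfSimilar (G : Subgroup (TreeAut m)) : Prop :=
  ∀ g ∈ G, ∀ v : List (Fin m), g.sec v ∈ G

/-- A spherically transitive group is fractal if `st_G(u)|_u = G` for all vertices `u`. -/
def Fractal (G : Subgroup (TreeAut m)) : Prop :=
  SphericallyTransitive G ∧
    ∀ u : List (Fin m),
      {h : TreeAut m | ∃ g ∈ G, g.apply u = u ∧ g.sec u = h} = (G : Set (TreeAut m))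

/-- A spherically transitive group is strongly fractal if `St_G(1)|_x = G` for all `x ∈ X`. -/
def StronglyFractal (G : Subgroup (TreeAut m)) : Prop :=
  SphericallyTransitive G ∧
    ∀ x : Fin m,
      {h : TreeAut m | ∃ g ∈ layerStab G 1, g.sec [x] = h} = (G : Set (TreeAut m))

/-- A spherically transitive group is very strongly fractal if
`St_G(n+1)|_x = St_G(n)` for all `n` and `x ∈ X`. -/
def VeryStronglyFractal (G : Subgroup (TreeAut m)) : Prop :=
  SphericallyTransitive G ∧
    ∀ (n : ℕ) (x : Fin m),
      {h : TreeAut m | ∃ g ∈ layerStab G (n + 1), g.sec [x] = h}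
        = (layerStab G n : Set (TreeAut m))

/-- A group of tree automorphisms is contracting if it has a finite nucleus. -/
def Contracting (G : Subgroup (TreeAut m)) : Prop :=
  ∃ N : Set (TreeAut m), N.Finite ∧ N ⊆ (G : Set (TreeAut m)) ∧
    ∀ g ∈ G, ∃ k : ℕ, ∀ v : List (Fin m), k < v.length → g.sec v ∈ N

/-- A tree automorphism is finite-state if it has finitely many distinct sections. -/
def FiniteState (f : TreeAut m) : Prop :=
  {h : TreeAut m | ∃ u : List (Fin m), f.sec u = h}.Finite

/-- A tree automorphism is bounded if the number of nontrivial sections at the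
`n`-th layer is bounded uniformly in `n`. -/
def BoundedAut (f : TreeAut m) : Prop :=
  ∃ C : ℕ, ∀ n : ℕ, {u : List (Fin m) | u.length = n ∧ f.sec u ≠ 1}.ncard ≤ C

/-- The `n`-th rigid layer stabiliser: the subgroup generated by the rigid vertex
stabilisers of the vertices of the `n`-th layer. -/
def rigidLayerStab (G : Subgroup (TreeAut m)) (n : ℕ) : Subgroup (TreeAut m) :=
  Subgroup.closure {g | g ∈ G ∧ ∃ v : List (Fin m), v.length = n ∧
    ∀ u : List (Fin m), ¬ v <+: u → g.apply u = u}

/-- A weakly branch group: spherically transitive with nontrivial rigid layer stabilisers. -/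
def WeaklyBranch (G : Subgroup (TreeAut m)) : Prop :=
  SphericallyTransitive G ∧ ∀ n : ℕ, rigidLayerStab G n ≠ ⊥

/-- `H` is weakly regular branch over `K ≤ H` if `ψ₁(St_K(1)) ⊇ K × ⋯ × K`. -/
def WeaklyRegularBranchOver (H K : Subgroup (TreeAut m)) : Prop :=
  K ≤ H ∧ ∀ f : Fin m → TreeAut m, (∀ x, f x ∈ K) → TreeAut.cons 1 f ∈ K

/-- The portrait of the `i`-th Basilica monomorphism `β^s_i` applied to `g`,
computed by recursion over vertices. -/
def betaLabel [NeZero m] (s : ℕ) : List (Fin m) → ℕ → TreeAut m → Equiv.Perm (Fin m)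
  | [], i, g => if i = 0 then g.label [] else 1
  | x :: u, i, g =>
      if i = 0 then betaLabel s u (s - 1) (g.sec [x])
      else if x = 0 then betaLabel s u (i - 1) g else 1

/-- The Basilica monomorphism `β^s_i : Aut(T) → Aut(T)`, satisfying
`β_i(g) = ψ₁⁻¹(β_{i-1}(g), 1, …, 1)` for `1 ≤ i ≤ s-1` and
`β_0(g) = g|^ε · ψ₁⁻¹(β_{s-1}(g|_0), …, β_{s-1}(g|_{m-1}))`. -/
def betaAut [NeZero m] (s i : ℕ) (g : TreeAut m) : TreeAut m := ⟨fun u => betaLabel s u i g⟩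

/-- The `s`-th Basilica group of `G`. -/
def basilica [NeZero m] (s : ℕ) (G : Subgroup (TreeAut m)) : Subgroup (TreeAut m) :=
  Subgroup.closure {b | ∃ g ∈ G, ∃ i < s, b = betaAut s i g}

/-- The subgroup `S_i = ⟨β_j(G) : j ≠ i⟩` of the `s`-th Basilica group. -/
def Ssub [NeZero m] (s i : ℕ) (G : Subgroup (TreeAut m)) : Subgroup (TreeAut m) :=
  Subgroup.closure {b | ∃ g ∈ G, ∃ j < s, j ≠ i ∧ b = betaAut s j g}

/-- The normal closure `N_i` of `S_i` in the `s`-th Basilica group of `G`. -/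
def Nsub [NeZero m] (s i : ℕ) (G : Subgroup (TreeAut m)) : Subgroup (TreeAut m) :=
  Subgroup.closure {x | ∃ b ∈ basilica s G, ∃ y ∈ Ssub s i G, x = b * y * b⁻¹}

/-- The `i`-th splitting kernel `K_i = β_i⁻¹(β_i(G) ∩ N_i)` of `G`, as a set. -/
def Kset [NeZero m] (s i : ℕ) (G : Subgroup (TreeAut m)) : Set (TreeAut m) :=
  {g | g ∈ G ∧ betaAut s i g ∈ Nsub s i G}

/-- The portrait of the monomorphism `π_i` (for the `d`-fold diagonal construction). -/
def piLabel (d : ℕ) : List (Fin m) → ℕ → TreeAut m → Equiv.Perm (Fin m)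
  | [], i, g => if i = 0 then g.label [] else 1
  | x :: u, i, g =>
      if i = 0 then piLabel d u (d - 1) (g.sec [x])
      else piLabel d u (i - 1) g

/-- The monomorphism `π_i : Aut(T) → Aut(T)`, satisfying
`π_0(g) = g|^ε · ψ₁⁻¹(π_{d-1}(g|_0), …, π_{d-1}(g|_{m-1}))` and
`π_i(g) = ψ₁⁻¹(π_{i-1}(g), …, π_{i-1}(g))` for `1 ≤ i ≤ d-1`. -/
def piAut (d i : ℕ) (g : TreeAut m) : TreeAut m := ⟨fun u => piLabel d u i g⟩

/-- The generator of the `m`-adic odometer: `a = σ · ψ₁⁻¹(a, 1, …, 1)` with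
`σ = (0 1 … m-1)`. -/
def odometer (m : ℕ) [NeZero m] : TreeAut m :=
  ⟨fun u => if ∀ x ∈ u, x = 0 then finRotate m else 1⟩

/-- The group `O_m^d = D_d(O_m) = ⟨π_i(a) : 0 ≤ i ≤ d-1⟩`. -/
def OdPow (m d : ℕ) [NeZero m] : Subgroup (TreeAut m) :=
  Subgroup.closure {x | ∃ i < d, x = piAut d i (odometer m)}

/-- The group `Γ` of all automorphisms all of whose labels are powers of the
cycle `σ = (0 1 … m-1)`. -/
def Gamma (m : ℕ) : Subgroup (TreeAut m) where
  carrier := {g | ∀ u : List (Fin m), g.label u ∈ Subgroup.zpowers (finRotate m)}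
  one_mem' := by
    intro u
    rw [TreeAut.one_label]
    exact one_mem _
  mul_mem' := by
    intro a b ha hb u
    rw [TreeAut.mul_label]
    exact mul_mem (ha _) (hb _)
  inv_mem' := by
    intro a ha u
    rw [TreeAut.inv_label]
    exact inv_mem (ha _)

/-- The Hausdorff dimension of `G ≤ Γ` relative to `Γ`. -/
noncomputable def hdim (m : ℕ) (G : Subgroup (TreeAut m)) : ℝ :=
  Filter.liminf (fun n : ℕ =>
    Real.logb m ((layerStab G n).relIndex G) /
      Real.logb m ((layerStab (Gamma m) n).relIndex (Gamma m))) Filter.atTop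

/-- The series of obstructions `o_G(n) = m·log_m|L_G(n-1)| - log_m|L_G(n)|` (for `n ≥ 1`),
where `L_G(n) = St_G(n)/St_G(n+1)`. -/
noncomputable def obstruction (m : ℕ) (G : Subgroup (TreeAut m)) (n : ℕ) : ℝ :=
  m * Real.logb m ((layerStab G n).relIndex (layerStab G (n - 1)))
    - Real.logb m ((layerStab G (n + 1)).relIndex (layerStab G n))

/-- The permutation group induced by `G` on the first layer acts regularly on `X`. -/
def RegularRootAction (G : Subgroup (TreeAut m)) : Prop :=
  (∀ x y : Fin m, ∃ g ∈ G, g.label [] x = y) ∧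
    ∀ g ∈ G, ∀ x : Fin m, g.label [] x = x → g.label [] = 1


section Aux

open TreeAut

variable {m : ℕ} [NeZero m]

lemma apply_single (g : TreeAut m) (x : Fin m) : g.apply [x] = [g.label [] x] := by
  simp [TreeAut.apply_cons]

lemma betaAut_label_nil_zero (s : ℕ) (g : TreeAut m) :
    (betaAut s 0 g).label [] = g.label [] := by
  simp [betaAut, betaLabel]

lemma betaAut_label_nil_ne (s i : ℕ) (hi : i ≠ 0) (g : TreeAut m) :
    (betaAut s i g).label [] = 1 := by
  simp [betaAut, betaLabel, hi]

lemma betaAut_zero_sec (s : ℕ) (g : TreeAut m) (x : Fin m) :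
    (betaAut s 0 g).sec [x] = betaAut s (s - 1) (g.sec [x]) :=
  TreeAut.ext_label fun u => by
    simp [betaAut, TreeAut.sec, betaLabel]

lemma betaAut_sec_zero (s i : ℕ) (hi : i ≠ 0) (g : TreeAut m) :
    (betaAut s i g).sec [(0 : Fin m)] = betaAut s (i - 1) g :=
  TreeAut.ext_label fun u => by
    simp [betaAut, TreeAut.sec, betaLabel, hi]

/-- Generalised Basilica-type group for a family of groups. -/
def Hgrp (s : ℕ) (Gs : ℕ → Subgroup (TreeAut m)) : Subgroup (TreeAut m) :=
  Subgroup.closure {b | ∃ i < s, ∃ g ∈ Gs i, b = betaAut s i g}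

/-- Sections at the vertex `0` of the stabiliser of `0`. -/
def stabSec (G : Subgroup (TreeAut m)) : Subgroup (TreeAut m) where
  carrier := {h | ∃ g ∈ G, g.apply [(0 : Fin m)] = [0] ∧ g.sec [0] = h}
  one_mem' := ⟨1, G.one_mem, TreeAut.one_apply _, rfl⟩
  mul_mem' := by
    rintro a b ⟨g1, hg1, h1a, rfl⟩ ⟨g2, hg2, h2a, rfl⟩
    refine ⟨g1 * g2, G.mul_mem hg1 hg2, ?_, ?_⟩
    · rw [TreeAut.mul_apply, h2a, h1a]
    · rw [TreeAut.mul_sec, h2a]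
  inv_mem' := by
    rintro a ⟨g, hg, ha, rfl⟩
    have hinv : g⁻¹.apply [(0 : Fin m)] = [0] := by
      apply TreeAut.apply_injective g
      rw [← TreeAut.mul_apply, mul_inv_cancel, TreeAut.one_apply, ha]
    refine ⟨g⁻¹, G.inv_mem hg, hinv, ?_⟩
    have h1 : (g⁻¹ * g).sec [(0 : Fin m)] = 1 := by rw [inv_mul_cancel]; rfl
    rw [TreeAut.mul_sec, ha] at h1
    exact eq_inv_of_mul_eq_one_left h1

lemma stabSec_sphericallyTransitive {G : Subgroup (TreeAut m)}
    (hG : SphericallyTransitive G) : SphericallyTransitive (stabSec G) := by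
  intro w t hwt
  obtain ⟨g, hg, hga⟩ := hG ((0 : Fin m) :: w) ((0 : Fin m) :: t) (by simp [hwt])
  rw [TreeAut.apply_cons] at hga
  injection hga with h0 hsec
  exact ⟨g.sec [0], ⟨g, hg, by rw [apply_single, h0], rfl⟩, hsec⟩

/-- The shifted family: lifting generators through the section at `0`. -/
lemma hgrp_shift_le (s : ℕ) (hs : 1 ≤ s) (Gs : ℕ → Subgroup (TreeAut m)) :
    Hgrp s (fun i => if i = s - 1 then stabSec (Gs 0) else Gs (i + 1)) ≤
      stabSec (Hgrp s Gs) := by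
  rw [Hgrp, Subgroup.closure_le]
  rintro b ⟨i, his, g, hg, rfl⟩
  by_cases h : i = s - 1
  · subst h
    simp only [if_pos rfl] at hg
    obtain ⟨g0, hg0, h0a, h0s⟩ := hg
    refine ⟨betaAut s 0 g0, Subgroup.subset_closure ⟨0, hs, g0, hg0, rfl⟩, ?_, ?_⟩
    · rw [apply_single, betaAut_label_nil_zero]
      rw [apply_single] at h0a
      injection h0a with h0a' _
      rw [h0a']
    · rw [betaAut_zero_sec, h0s]
  · simp only [if_neg h] at hg
    have hi1 : i + 1 < s := by omega
    refine ⟨betaAut s (i + 1) g, Subgroup.subset_closure ⟨i + 1, hi1, g, hg, rfl⟩, ?_, ?_⟩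
    · rw [apply_single, betaAut_label_nil_ne s (i + 1) (Nat.succ_ne_zero i) g]
      rfl
    · rw [betaAut_sec_zero s (i + 1) (Nat.succ_ne_zero i) g]
      simp

/-- Main induction: the generalised Basilica group of a family of spherically
transitive groups acts transitively on every layer. -/
lemma hgrp_trans (s : ℕ) (hs : 1 ≤ s) :
    ∀ n : ℕ, ∀ Gs : ℕ → Subgroup (TreeAut m),
      (∀ i < s, SphericallyTransitive (Gs i)) →
      ∀ u v : List (Fin m), u.length = n → v.length = n →
        ∃ b ∈ Hgrp s Gs, b.apply u = v := by
  intro n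
  induction n with
  | zero =>
      intro Gs _ u v hu hv
      rw [List.length_eq_zero_iff] at hu hv
      subst hu; subst hv
      exact ⟨1, one_mem _, TreeAut.one_apply _⟩
  | succ n ih =>
      intro Gs hGs u v hu hv
      obtain ⟨x, w, rfl⟩ : ∃ x w, u = x :: w := by
        cases u with
        | nil => simp at hu
        | cons x w => exact ⟨x, w, rfl⟩
      obtain ⟨y, t, rfl⟩ : ∃ y t, v = y :: t := by
        cases v with
        | nil => simp at hv
        | cons y t => exact ⟨y, t, rfl⟩
      simp only [List.length_cons, Nat.succ.injEq] at hu hv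
      have hG0 := hGs 0 hs
      -- move the first letter `x` to `0`
      obtain ⟨g1, hg1, hg1a⟩ := hG0 [x] [(0 : Fin m)] rfl
      rw [apply_single] at hg1a
      injection hg1a with hg1l _
      -- move the first letter `0` to `y`
      obtain ⟨g2, hg2, hg2a⟩ := hG0 [(0 : Fin m)] [y] rfl
      rw [apply_single] at hg2a
      injection hg2a with hg2l _
      set e := betaAut s (s - 1) (g2.sec [(0 : Fin m)]) with he
      set r := e⁻¹.apply t with hr
      have her : e.apply r = t := by
        rw [hr, ← TreeAut.mul_apply, mul_inv_cancel, TreeAut.one_apply]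
      set w1 := (betaAut s (s - 1) (g1.sec [x])).apply w with hw1
      -- inductive step with the shifted family
      have hGs' : ∀ i < s,
          SphericallyTransitive
            ((fun i => if i = s - 1 then stabSec (Gs 0) else Gs (i + 1)) i) := by
        intro i hi
        by_cases h : i = s - 1
        · simp only [h, if_pos rfl]
          exact stabSec_sphericallyTransitive hG0
        · simp only [if_neg h]
          exact hGs (i + 1) (by omega)
      obtain ⟨d, hd, hda⟩ := ih _ hGs' w1 r
        (by rw [hw1, TreeAut.apply_length, hu])
        (by rw [hr, TreeAut.apply_length, hv])
      obtain ⟨b, hb, hba, hbs⟩ := hgrp_shift_le s hs Gs hd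
      have hb1 : betaAut s 0 g1 ∈ Hgrp s Gs :=
        Subgroup.subset_closure ⟨0, hs, g1, hg1, rfl⟩
      have hb2 : betaAut s 0 g2 ∈ Hgrp s Gs :=
        Subgroup.subset_closure ⟨0, hs, g2, hg2, rfl⟩
      refine ⟨betaAut s 0 g2 * b * betaAut s 0 g1,
        mul_mem (mul_mem hb2 hb) hb1, ?_⟩
      rw [TreeAut.mul_apply, TreeAut.mul_apply]
      have step1 : (betaAut s 0 g1).apply (x :: w) = (0 : Fin m) :: w1 := by
        rw [TreeAut.apply_cons, betaAut_label_nil_zero, hg1l, betaAut_zero_sec]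
      have hbl : b.label [] 0 = (0 : Fin m) := by
        rw [apply_single] at hba
        injection hba
      have step2 : b.apply ((0 : Fin m) :: w1) = (0 : Fin m) :: r := by
        rw [TreeAut.apply_cons, hbl, hbs, hda]
      have step3 : (betaAut s 0 g2).apply ((0 : Fin m) :: r) = y :: t := by
        rw [TreeAut.apply_cons, betaAut_label_nil_zero, hg2l, betaAut_zero_sec, ← he, her]
      rw [step1, step2, step3]

end Aux

/-- If `G ≤ Aut(T)` acts spherically transitively on `T`, then for every
`s ≥ 1` the `s`-th Basilica group `Bas_s(G)` acts spherically transitively on `T`. -/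
theorem basilica_sphericallyTransitive {m : ℕ} [NeZero m] (hm : 2 ≤ m)
    (G : Subgroup (TreeAut m)) (hG : SphericallyTransitive G)
    (s : ℕ) (hs : 1 ≤ s) :
    SphericallyTransitive (basilica s G) := by
  have heq : basilica s G = Hgrp s (fun _ => G) := by
    unfold basilica Hgrp
    congr 1
    ext b
    constructor
    · rintro ⟨g, hg, i, hi, rfl⟩; exact ⟨i, hi, g, hg, rfl⟩
    · rintro ⟨i, hi, g, hg, rfl⟩; exact ⟨g, hg, i, hi, rfl⟩
  intro u v huv
  rw [heq]
  exact hgrp_trans s hs v.length (fun _ => G) (fun _ _ => hG) u v huv rfl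

end Basilica
end

section
/- Let G ≤ Aut(T) be self-similar. Then for every integer s ≥ 1 the s-th Basilica group Bas_s(G) is self-similar. -/
/-!
Groups of automorphisms of the `m`-regular rooted tree, encoded via portraits:
an automorphism is determined by the family of its labels (local actions)
`label : List (Fin m) → Equiv.Perm (Fin m)`.
-/

namespace Basilica

variable {m : ℕ}

lemma sec_mem_basilica {m : ℕ} [NeZero m] {s : ℕ} (hs : 1 ≤ s)
    {G : Subgroup (TreeAut m)} (hG : SelfSimilar G) :
    ∀ (v : List (Fin m)) (g : TreeAut m), g ∈ G → ∀ i < s,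
      (betaAut s i g).sec v ∈ basilica s G := by
  intro v
  induction v with
  | nil =>
      intro g hg i hi
      rw [TreeAut.sec_nil]
      exact Subgroup.subset_closure ⟨g, hg, i, hi, rfl⟩
  | cons x v ih =>
      intro g hg i hi
      have hsplit : (betaAut s i g).sec (x :: v) = ((betaAut s i g).sec [x]).sec v := by
        rw [TreeAut.sec_sec]; rfl
      rw [hsplit]
      by_cases h0 : i = 0
      · have hEq : (betaAut s i g).sec [x] = betaAut s (s - 1) (g.sec [x]) :=
          TreeAut.ext_label fun u => by simp [betaAut, TreeAut.sec_label, betaLabel, h0]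
        rw [hEq]
        exact ih _ (hG g hg [x]) (s - 1) (by omega)
      · by_cases hx : x = 0
        · have hEq : (betaAut s i g).sec [x] = betaAut s (i - 1) g :=
            TreeAut.ext_label fun u => by simp [betaAut, TreeAut.sec_label, betaLabel, h0, hx]
          rw [hEq]
          exact ih _ hg (i - 1) (by omega)
        · have hEq : (betaAut s i g).sec [x] = 1 :=
            TreeAut.ext_label fun u => by simp [betaAut, TreeAut.sec_label, betaLabel, h0, hx]
          rw [hEq, TreeAut.one_sec]
          exact one_mem _

/-- If `G ≤ Aut(T)` is self-similar, then for every `s ≥ 1` the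
`s`-th Basilica group `Bas_s(G)` is self-similar. -/
theorem basilica_selfSimilar {m : ℕ} [NeZero m] (hm : 2 ≤ m)
    (G : Subgroup (TreeAut m)) (hG : SelfSimilar G)
    (s : ℕ) (hs : 1 ≤ s) :
    SelfSimilar (basilica s G) := by
  intro g hg
  refine Subgroup.closure_induction
    (p := fun g _ => ∀ v : List (Fin m), g.sec v ∈ basilica s G) ?_ ?_ ?_ ?_ hg
  · rintro x ⟨a, haG, i, his, rfl⟩ v
    exact sec_mem_basilica hs hG v a haG i his
  · intro v
    rw [TreeAut.one_sec]
    exact one_mem _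
  · intro a b _ _ ha hb v
    rw [TreeAut.mul_sec]
    exact mul_mem (ha _) (hb _)
  · intro a _ ha v
    have h := TreeAut.mul_sec a a⁻¹ v
    rw [mul_inv_cancel, TreeAut.one_sec] at h
    rw [← inv_eq_of_mul_eq_one_right h.symm]
    exact inv_mem (ha _)

end Basilica
end

section
/- Let G ≤ Aut(T) be generated by finite-state bounded automorphisms. Then for every integer s ≥ 1 the s-th Basilica group Bas_s(G) is also generated by finite-state bounded automorphisms; indeed, for every finite-state bounded f ∈ Aut(T) and every i ∈ {0,…,s−1}, the element β_i(f) is finite-state and bounded. -/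
/-!
Groups of automorphisms of the `m`-regular rooted tree, encoded via portraits:
an automorphism is determined by the family of its labels (local actions)
`label : List (Fin m) → Equiv.Perm (Fin m)`.
-/

namespace Basilica

variable {m : ℕ}

section Auxiliary

namespace TreeAut
variable {m : ℕ}

lemma sec_inv (a : TreeAut m) (u : List (Fin m)) :
    a⁻¹.sec u = (a.sec (a.invApply u))⁻¹ := by
  have h := mul_sec a⁻¹ a (a.invApply u)
  rw [inv_mul_cancel, one_sec, apply_invApply] at h
  exact eq_inv_of_mul_eq_one_left h.symm

lemma invApply_length (a : TreeAut m) (u : List (Fin m)) :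
    (a.invApply u).length = u.length := by
  conv_rhs => rw [← apply_invApply a u]
  rw [apply_length]

lemma invApply_injective (a : TreeAut m) : Function.Injective a.invApply :=
  Function.LeftInverse.injective (apply_invApply a)

end TreeAut

variable {m : ℕ}
open TreeAut

lemma finiteState_one : FiniteState (1 : TreeAut m) := by
  apply Set.Finite.subset (Set.finite_singleton 1)
  rintro h ⟨u, rfl⟩
  simp [Set.mem_singleton_iff]

lemma boundedAut_one : BoundedAut (1 : TreeAut m) := by
  refine ⟨0, fun n => ?_⟩
  have : {u : List (Fin m) | u.length = n ∧ (1 : TreeAut m).sec u ≠ 1} = ∅ := by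
    ext u; simp
  rw [this, Set.ncard_empty]

lemma finiteState_mul {a b : TreeAut m} (ha : FiniteState a) (hb : FiniteState b) :
    FiniteState (a * b) := by
  apply Set.Finite.subset (Set.Finite.image2 (· * ·) ha hb)
  rintro h ⟨u, rfl⟩
  exact ⟨_, ⟨b.apply u, rfl⟩, _, ⟨u, rfl⟩, (mul_sec a b u).symm⟩

lemma finiteState_inv {a : TreeAut m} (ha : FiniteState a) : FiniteState a⁻¹ := by
  apply Set.Finite.subset (ha.image (·⁻¹))
  rintro h ⟨u, rfl⟩
  exact ⟨a.sec (a.invApply u), ⟨_, rfl⟩, (sec_inv a u).symm⟩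

lemma boundedAut_mul {a b : TreeAut m} (ha : BoundedAut a) (hb : BoundedAut b) :
    BoundedAut (a * b) := by
  obtain ⟨C, hC⟩ := ha
  obtain ⟨D, hD⟩ := hb
  refine ⟨C + D, fun n => ?_⟩
  have finn := List.finite_length_eq (Fin m) n
  have finA : {u : List (Fin m) | u.length = n ∧ a.sec (b.apply u) ≠ 1}.Finite :=
    finn.subset fun v hv => hv.1
  have finB : {u : List (Fin m) | u.length = n ∧ b.sec u ≠ 1}.Finite :=
    finn.subset fun v hv => hv.1
  have hsub : {u : List (Fin m) | u.length = n ∧ (a * b).sec u ≠ 1} ⊆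
      {u | u.length = n ∧ a.sec (b.apply u) ≠ 1} ∪ {u | u.length = n ∧ b.sec u ≠ 1} := by
    rintro u ⟨hlen, hne⟩
    by_cases hbu : b.sec u = 1
    · left
      refine ⟨hlen, fun h => hne ?_⟩
      rw [mul_sec, h, hbu, mul_one]
    · right; exact ⟨hlen, hbu⟩
  refine le_trans (Set.ncard_le_ncard hsub (finA.union finB)) ?_
  refine le_trans (Set.ncard_union_le _ _) ?_
  have h1 : {u : List (Fin m) | u.length = n ∧ a.sec (b.apply u) ≠ 1}.ncard ≤ C := by
    refine le_trans (Set.ncard_le_ncard_of_injOn b.apply ?_ (b.apply_injective.injOn) ?_) (hC n)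
    · rintro u ⟨hlen, hne⟩
      exact ⟨by rw [apply_length]; exact hlen, hne⟩
    · exact finn.subset fun v hv => hv.1
  exact Nat.add_le_add h1 (hD n)

lemma boundedAut_inv {a : TreeAut m} (ha : BoundedAut a) : BoundedAut a⁻¹ := by
  obtain ⟨C, hC⟩ := ha
  refine ⟨C, fun n => ?_⟩
  refine le_trans (Set.ncard_le_ncard_of_injOn a.invApply ?_ (a.invApply_injective.injOn) ?_) (hC n)
  · rintro u ⟨hlen, hne⟩
    refine ⟨by rw [invApply_length]; exact hlen, fun h => hne ?_⟩
    rw [sec_inv, h, inv_one]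
  · exact (List.finite_length_eq (Fin m) n).subset fun v hv => hv.1

end Auxiliary

section BetaAux

variable {m : ℕ}
open TreeAut

lemma betaLabel_one [NeZero m] (s : ℕ) :
    ∀ (u : List (Fin m)) (i : ℕ), betaLabel s u i (1 : TreeAut m) = 1 := by
  intro u
  induction u with
  | nil =>
      intro i
      simp only [betaLabel]
      split <;> rfl
  | cons x u ih =>
      intro i
      simp only [betaLabel, one_sec]
      split_ifs <;> first | exact ih _ | rfl

lemma betaAut_one [NeZero m] (s i : ℕ) : betaAut s i (1 : TreeAut m) = 1 :=
  TreeAut.ext_label fun u => by rw [one_label]; exact betaLabel_one s u i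

lemma betaAut_sec_single [NeZero m] (s i : ℕ) (g : TreeAut m) (x : Fin m) :
    (betaAut s i g).sec [x] =
      if i = 0 then betaAut s (s - 1) (g.sec [x])
      else if x = 0 then betaAut s (i - 1) g else 1 :=
  TreeAut.ext_label fun u => by
    show betaLabel s ([x] ++ u) i g = _
    rw [List.singleton_append]
    show betaLabel s (x :: u) i g = _
    rw [betaLabel]
    split_ifs <;> rfl

/-- The "core word" extracted from a vertex `u` when computing sections of `betaAut`. -/
def core [NeZero m] (s : ℕ) : ℕ → List (Fin m) → Option (List (Fin m))
  | _, [] => some []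
  | i, x :: u =>
      if i = 0 then (core s (s - 1) u).map (x :: ·)
      else if x = 0 then core s (i - 1) u else none

/-- The length of the core word, depending only on the index and vertex length. -/
def klen (s : ℕ) : ℕ → ℕ → ℕ
  | _, 0 => 0
  | i, n + 1 => if i = 0 then klen s (s - 1) n + 1 else klen s (i - 1) n

lemma core_length [NeZero m] (s : ℕ) :
    ∀ (u : List (Fin m)) (i : ℕ) (w : List (Fin m)),
      core s i u = some w → w.length = klen s i u.length := by
  intro u
  induction u with
  | nil =>
      rintro i w h
      simp only [core, Option.some.injEq] at h
      subst h
      rfl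
  | cons x u ih =>
      intro i w h
      simp only [core] at h
      by_cases h0 : i = 0
      · rw [if_pos h0] at h
        obtain ⟨w', hw', rfl⟩ := Option.map_eq_some_iff.mp h
        simp [klen, h0, ih _ _ hw']
      · rw [if_neg h0] at h
        by_cases hx : x = 0
        · rw [if_pos hx] at h
          simp only [List.length_cons, klen, if_neg h0]
          exact ih _ _ h
        · rw [if_neg hx] at h
          exact absurd h (by simp)

lemma core_inj [NeZero m] (s : ℕ) :
    ∀ (u v : List (Fin m)) (i : ℕ) (w : List (Fin m)), u.length = v.length →
      core s i u = some w → core s i v = some w → u = v := by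
  intro u
  induction u with
  | nil =>
      intro v i w hlen _ _
      cases v with
      | nil => rfl
      | cons y v => simp at hlen
  | cons x u ih =>
      intro v i w hlen hu hv
      cases v with
      | nil => simp at hlen
      | cons y v =>
          simp only [List.length_cons, Nat.add_right_cancel_iff] at hlen
          simp only [core] at hu hv
          by_cases h0 : i = 0
          · rw [if_pos h0] at hu hv
            obtain ⟨w1, hw1, hww1⟩ := Option.map_eq_some_iff.mp hu
            obtain ⟨w2, hw2, hww2⟩ := Option.map_eq_some_iff.mp hv
            have hxy := hww1.trans hww2.symm
            injection hxy with hxy1 hxy2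
            subst hxy1
            subst hxy2
            rw [ih v (s - 1) w1 hlen hw1 hw2]
          · rw [if_neg h0] at hu hv
            by_cases hx : x = 0
            · rw [if_pos hx] at hu
              by_cases hy : y = 0
              · rw [if_pos hy] at hv
                rw [hx, hy, ih v (i - 1) w hlen hu hv]
              · rw [if_neg hy] at hv
                exact absurd hv (by simp)
            · rw [if_neg hx] at hu
              exact absurd hu (by simp)

lemma betaAut_secForm [NeZero m] {s : ℕ} (hs : 1 ≤ s) :
    ∀ (u : List (Fin m)) (i : ℕ) (g : TreeAut m), i < s →
      ((betaAut s i g).sec u = 1 ∧ core s i u = none) ∨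
      (∃ j w, j < s ∧ core s i u = some w ∧
        (betaAut s i g).sec u = betaAut s j (g.sec w)) := by
  intro u
  induction u with
  | nil =>
      intro i g hi
      right
      exact ⟨i, [], hi, rfl, by rw [TreeAut.sec_nil, TreeAut.sec_nil]⟩
  | cons x u ih =>
      intro i g hi
      have hsec : (betaAut s i g).sec (x :: u) = ((betaAut s i g).sec [x]).sec u := by
        rw [TreeAut.sec_sec]
        rfl
      by_cases h0 : i = 0
      · subst h0
        rw [hsec, betaAut_sec_single, if_pos rfl]
        have hs1 : s - 1 < s := Nat.sub_lt hs Nat.one_pos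
        rcases ih (s - 1) (g.sec [x]) hs1 with ⟨h1, h2⟩ | ⟨j, w, hj, hw, hsec'⟩
        · left
          exact ⟨h1, by simp [core, h2]⟩
        · right
          refine ⟨j, x :: w, hj, ?_, ?_⟩
          · simp [core, hw]
          · rw [hsec', TreeAut.sec_sec]
            rfl
      · rw [hsec, betaAut_sec_single, if_neg h0]
        by_cases hx : x = 0
        · rw [if_pos hx]
          have hi1 : i - 1 < s := lt_of_le_of_lt (Nat.sub_le i 1) hi
          rcases ih (i - 1) g hi1 with ⟨h1, h2⟩ | ⟨j, w, hj, hw, hsec'⟩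
          · left
            exact ⟨h1, by simp [core, h0, hx, h2]⟩
          · right
            exact ⟨j, w, hj, by simp [core, h0, hx, hw], hsec'⟩
        · rw [if_neg hx, TreeAut.one_sec]
          left
          exact ⟨rfl, by simp [core, h0, hx]⟩

lemma finiteState_betaAut [NeZero m] {s i : ℕ} (hs : 1 ≤ s) (hi : i < s)
    {f : TreeAut m} (hf : FiniteState f) : FiniteState (betaAut s i f) := by
  have hbig : ({1} ∪ Set.image2 (fun j h => betaAut s j h) (Set.Iio s)
      {h : TreeAut m | ∃ u, f.sec u = h} : Set (TreeAut m)).Finite :=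
    (Set.finite_singleton 1).union (Set.Finite.image2 _ (Set.finite_Iio s) hf)
  apply hbig.subset
  rintro h ⟨u, rfl⟩
  rcases betaAut_secForm hs u i f hi with ⟨h1, _⟩ | ⟨j, w, hj, _, hsec⟩
  · left
    exact h1
  · right
    exact ⟨j, hj, f.sec w, ⟨w, rfl⟩, hsec.symm⟩

lemma boundedAut_betaAut [NeZero m] {s i : ℕ} (hs : 1 ≤ s) (hi : i < s)
    {f : TreeAut m} (hf : BoundedAut f) : BoundedAut (betaAut s i f) := by
  obtain ⟨C, hC⟩ := hf
  refine ⟨C, fun n => ?_⟩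
  refine le_trans (Set.ncard_le_ncard_of_injOn
      (fun u => (core s i u).getD []) ?_ ?_ ?_) (hC (klen s i n))
  · rintro u ⟨hlen, hne⟩
    rcases betaAut_secForm hs u i f hi with ⟨h1, _⟩ | ⟨j, w, hj, hw, hsec⟩
    · exact absurd h1 hne
    · refine ⟨?_, ?_⟩
      · simp only [hw, Option.getD_some]
        rw [core_length s u i w hw, hlen]
      · simp only [hw, Option.getD_some]
        intro hone
        exact hne (by rw [hsec, hone, betaAut_one])
  · rintro u ⟨hlu, hneu⟩ v ⟨hlv, hnev⟩ heq
    rcases betaAut_secForm hs u i f hi with ⟨h1, _⟩ | ⟨j, w, hj, hw, _⟩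
    · exact absurd h1 hneu
    rcases betaAut_secForm hs v i f hi with ⟨h1, _⟩ | ⟨j', w', hj', hw', _⟩
    · exact absurd h1 hnev
    have hww : w = w' := by simpa [hw, hw'] using heq
    exact core_inj s u v i w (hlu.trans hlv.symm) hw (hww ▸ hw')
  · exact (List.finite_length_eq (Fin m) (klen s i n)).subset fun w hw => hw.1

end BetaAux

/-- If `G ≤ Aut(T)` is generated by finite-state bounded automorphisms,
then so is `Bas_s(G)` for every `s ≥ 1`; indeed, for every finite-state bounded
`f ∈ Aut(T)` and every `i ∈ {0, …, s-1}`, the element `β_i(f)` is finite-state and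
bounded. -/
theorem basilica_finiteState_bounded {m : ℕ} [NeZero m] (hm : 2 ≤ m)
    (G : Subgroup (TreeAut m)) (s : ℕ) (hs : 1 ≤ s)
    (hG : ∃ S : Set (TreeAut m), (∀ f ∈ S, FiniteState f ∧ BoundedAut f) ∧
      G = Subgroup.closure S) :
    (∃ S : Set (TreeAut m), (∀ f ∈ S, FiniteState f ∧ BoundedAut f) ∧
      basilica s G = Subgroup.closure S) ∧
    ∀ f : TreeAut m, FiniteState f → BoundedAut f → ∀ i < s,
      FiniteState (betaAut s i f) ∧ BoundedAut (betaAut s i f) := by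
  obtain ⟨S, hSfb, rfl⟩ := hG
  have key : ∀ f : TreeAut m, FiniteState f → BoundedAut f → ∀ i < s,
      FiniteState (betaAut s i f) ∧ BoundedAut (betaAut s i f) :=
    fun f hfs hb i hi => ⟨finiteState_betaAut hs hi hfs, boundedAut_betaAut hs hi hb⟩
  refine ⟨?_, key⟩
  let H : Subgroup (TreeAut m) :=
    { carrier := {g | FiniteState g ∧ BoundedAut g}
      one_mem' := ⟨finiteState_one, boundedAut_one⟩
      mul_mem' := fun ha hb => ⟨finiteState_mul ha.1 hb.1, boundedAut_mul ha.2 hb.2⟩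
      inv_mem' := fun ha => ⟨finiteState_inv ha.1, boundedAut_inv ha.2⟩ }
  have hGH : Subgroup.closure S ≤ H := (Subgroup.closure_le H).mpr fun f hf => hSfb f hf
  refine ⟨{b | ∃ g ∈ Subgroup.closure S, ∃ i < s, b = betaAut s i g}, ?_, rfl⟩
  rintro b ⟨g, hg, i, hi, rfl⟩
  have hgH := hGH hg
  exact key g hgH.1 hgH.2 i hi


end Basilica
end
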